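/- Let $G$ be a locally compact Polish group acting Borel-measurably on a standard Borel space $X$. Then the set $\mathrm{Free}(X) = \{x \in X : \forall g \in G \setminus \{1_G\},\ g\cdot x \neq x\}$ is a Borel subset of $X$. -/

import Mathlib

open MeasureTheory Filter Topology Set Pointwise

/-! Auxiliary lemmas for `free_part_is_borel`. -/

private lemma min1_lip (s t : ℝ) (hs : 0 ≤ s) (ht : 0 ≤ t) :
    |min 1 s - min 1 t| ≤ min 1 |s - t| := by
  refine le_min ?_ ?_
  · rw [abs_sub_le_iff]
    constructor <;>
      nlinarith [min_le_left (1:ℝ) s, min_le_left (1:ℝ) t,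
        le_min zero_le_one hs, le_min zero_le_one ht]
  · refine (abs_min_sub_min_le_max 1 s 1 t).trans ?_
    simp

private lemma min1_abs (a b c : ℝ) :
    abs (min 1 |a - c| - min 1 |b - c|) ≤ min 1 |a - b| := by
  refine (min1_lip _ _ (abs_nonneg _) (abs_nonneg _)).trans
    (min_le_min le_rfl ?_)
  have h := abs_abs_sub_abs_le_abs_sub (a - c) (b - c)
  simpa [sub_sub_sub_cancel_right] using h

private lemma integrableOn_of_bounded' {α : Type*} [MeasurableSpace α] {μ : Measure α}
    {s : Set α} (hs : μ s < ⊤) {f : α → ℝ} (hf : Measurable f) (hb : ∀ x, |f x| ≤ 1) :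
    IntegrableOn f s μ :=
  Integrable.mono' ((integrableOn_const_iff (C := (1:ℝ))).2 (Or.inr hs)) hf.aestronglyMeasurable
    (Filter.Eventually.of_forall fun x => by simpa [Real.norm_eq_abs] using hb x)

/-- Continuity of translation in `L¹` of a right Haar measure, in the precise form we
need: for a bounded measurable `F` and compact `T`,
`∫ k in T, min 1 |F (k * u) - F k| → 0` as `u → 1`. -/
private lemma tendsto_translate_integral {G : Type*} [TopologicalSpace G] [PolishSpace G]
    [Group G] [IsTopologicalGroup G] [LocallyCompactSpace G]
    [MeasurableSpace G] [BorelSpace G]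
    (μ : Measure G) [μ.IsMulRightInvariant] [μ.Regular]
    (F : G → ℝ) (hF : Measurable F) (hFb : ∀ g, |F g| ≤ 1)
    {T : Set G} (hT : IsCompact T) :
    Tendsto (fun u => ∫ k in T, min 1 |F (k * u) - F k| ∂μ) (𝓝 1) (𝓝 0) := by
  letI := TopologicalSpace.upgradeIsCompletelyMetrizable G
  obtain ⟨C, hCc, hCn⟩ := exists_compact_mem_nhds (1 : G)
  set S : Set G := T * C ∪ T with hS
  have hSc : IsCompact S := (hT.mul hCc).union hT
  set F1 : G → ℝ := S.indicator F with hF1def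
  have hF1m : Measurable F1 := hF.indicator hSc.measurableSet
  have hF1i : Integrable F1 μ := by
    rw [hF1def, integrable_indicator_iff hSc.measurableSet]
    exact integrableOn_of_bounded' hSc.measure_lt_top hF hFb
  rw [Metric.tendsto_nhds]
  intro ε hε
  obtain ⟨φ, hφsupp, hφnear, hφcont, hφint⟩ :=
    hF1i.exists_hasCompactSupport_integral_sub_le (by positivity : (0:ℝ) < ε/4)
  obtain ⟨M, hM⟩ := hφsupp.exists_bound_of_continuous hφcont
  have hM0 : (0:ℝ) ≤ M := le_trans (norm_nonneg _) (hM 1)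
  set K0 : Set G := tsupport φ * C⁻¹ ∪ tsupport φ with hK0def
  have hK0c : IsCompact K0 := IsCompact.union (IsCompact.mul hφsupp hCc.inv) hφsupp
  -- the classical part: continuity of translation for continuous compactly supported φ
  have hJ : Tendsto (fun u => ∫ k, |φ (k * u) - φ k| ∂μ) (𝓝 1)
      (𝓝 (∫ k, |φ (k * (1:G)) - φ k| ∂μ)) := by
    apply tendsto_integral_filter_of_dominated_convergence
      (bound := K0.indicator fun _ => 2 * M)
    · filter_upwards with u
      exact (((hφcont.comp (continuous_mul_right u)).sub hφcont).abs).aestronglyMeasurable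
    · filter_upwards [hCn] with u huC
      filter_upwards with k
      by_cases hk : k ∈ K0
      · rw [Set.indicator_of_mem hk]
        have h1 := hM (k * u); have h2 := hM k
        rw [Real.norm_eq_abs] at *
        have : |(|φ (k * u) - φ k|)| = |φ (k * u) - φ k| := abs_abs _
        rw [this]
        calc |φ (k * u) - φ k| ≤ |φ (k * u)| + |φ k| := by
              have := abs_add_le (φ (k * u)) (-(φ k))
              simpa [sub_eq_add_neg] using this
          _ ≤ 2 * M := by linarith
      · rw [Set.indicator_of_notMem hk]
        have hk1 : k ∉ tsupport φ := fun h => hk (Or.inr h)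
        have hk2 : k * u ∉ tsupport φ := by
          intro h
          exact hk (Or.inl ⟨k * u, h, u⁻¹, inv_mem_inv.2 huC, by group⟩)
        simp [image_eq_zero_of_notMem_tsupport hk1, image_eq_zero_of_notMem_tsupport hk2]
    · exact (integrable_indicator_iff hK0c.measurableSet).2
        ((integrableOn_const_iff (C := 2 * M)).2 (Or.inr hK0c.measure_lt_top))
    · filter_upwards with k
      exact (((hφcont.comp (continuous_mul_left k)).sub continuous_const).abs).tendsto 1
  have hJ0 : ∫ k, |φ (k * (1:G)) - φ k| ∂μ = 0 := by simp
  rw [hJ0] at hJ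
  have hJ' : ∀ᶠ u in 𝓝 (1:G), ∫ k, |φ (k * u) - φ k| ∂μ < ε/4 :=
    hJ.eventually_lt_const (by positivity)
  filter_upwards [hCn, hJ'] with u huC hJu
  have hnn : 0 ≤ ∫ k in T, min 1 |F (k * u) - F k| ∂μ :=
    integral_nonneg fun k => le_min zero_le_one (abs_nonneg _)
  rw [Real.dist_0_eq_abs, abs_of_nonneg hnn]
  -- integrability facts
  have hIu : Integrable (fun k => F1 (k * u)) μ := by
    have := ((measurePreserving_mul_right μ u).integrable_comp
      hF1i.aestronglyMeasurable).2 hF1i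
    simpa [Function.comp_def] using this
  have hφIu : Integrable (fun k => φ (k * u)) μ := by
    have := ((measurePreserving_mul_right μ u).integrable_comp
      hφint.aestronglyMeasurable).2 hφint
    simpa [Function.comp_def] using this
  have hA : Integrable (fun k => |F1 (k*u) - φ (k*u)|) μ := by
    simpa using (hIu.sub hφIu).abs
  have hB : Integrable (fun k => |φ (k*u) - φ k|) μ := by
    simpa using (hφIu.sub hφint).abs
  have hC : Integrable (fun k => |φ k - F1 k|) μ := by
    simpa using (hφint.sub hF1i).abs
  have hAB : Integrable (fun k => |F1 (k*u) - φ (k*u)| + |φ (k*u) - φ k|) μ := hA.add hB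
  have hABCi : Integrable
      (fun k => |F1 (k*u) - φ (k*u)| + |φ (k*u) - φ k| + |φ k - F1 k|) μ := hAB.add hC
  -- step 1: pass to F1 on T
  have step1 : ∫ k in T, min 1 |F (k * u) - F k| ∂μ
      ≤ ∫ k in T, |F1 (k * u) - F1 k| ∂μ := by
    have habs : Integrable (fun k => |F1 (k * u) - F1 k|) μ := by
      simpa using (hIu.sub hF1i).abs
    refine setIntegral_mono_on ?_ habs.integrableOn hT.measurableSet ?_
    · refine integrableOn_of_bounded' hT.measure_lt_top
        (measurable_const.min ((hF.comp (measurable_mul_const u)).sub hF).abs) ?_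
      intro k
      rw [abs_of_nonneg (le_min zero_le_one (abs_nonneg _))]
      exact min_le_left _ _
    · intro k hkT
      have h1 : F1 k = F k := Set.indicator_of_mem (Set.mem_union_right _ hkT) F
      have h2 : F1 (k * u) = F (k * u) :=
        Set.indicator_of_mem (Set.mem_union_left _ (Set.mul_mem_mul hkT huC)) F
      rw [h1, h2]
      exact min_le_right _ _
  -- step 2: pass to all of G
  have habs2 : Integrable (fun k => |F1 (k * u) - F1 k|) μ := by
    simpa using (hIu.sub hF1i).abs
  have step2 : ∫ k in T, |F1 (k * u) - F1 k| ∂μ ≤ ∫ k, |F1 (k * u) - F1 k| ∂μ :=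
    setIntegral_le_integral habs2
      (Filter.Eventually.of_forall fun k => abs_nonneg _)
  -- step 3: triangle inequality
  have step3 : ∫ k, |F1 (k * u) - F1 k| ∂μ
      ≤ ∫ k, (|F1 (k*u) - φ (k*u)| + |φ (k*u) - φ k| + |φ k - F1 k|) ∂μ := by
    refine integral_mono habs2 hABCi fun k => ?_
    calc |F1 (k*u) - F1 k| ≤ |F1 (k*u) - φ k| + |φ k - F1 k| := abs_sub_le _ _ _
      _ ≤ (|F1 (k*u) - φ (k*u)| + |φ (k*u) - φ k|) + |φ k - F1 k| := by
          have := abs_sub_le (F1 (k*u)) (φ (k*u)) (φ k)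
          linarith
      _ = _ := by ring
  have hsplit : ∫ k, (|F1 (k*u) - φ (k*u)| + |φ (k*u) - φ k| + |φ k - F1 k|) ∂μ
      = (∫ k, |F1 (k*u) - φ (k*u)| ∂μ) + (∫ k, |φ (k*u) - φ k| ∂μ)
        + ∫ k, |φ k - F1 k| ∂μ := by
    rw [integral_add hAB hC, integral_add hA hB]
  have hinv : ∫ k, |F1 (k*u) - φ (k*u)| ∂μ = ∫ k, |F1 k - φ k| ∂μ :=
    integral_mul_right_eq_self (fun k => |F1 k - φ k|) u
  have hnear : ∫ k, |F1 k - φ k| ∂μ ≤ ε/4 := by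
    have := hφnear
    simpa [Real.norm_eq_abs] using this
  have hnear2 : ∫ k, |φ k - F1 k| ∂μ ≤ ε/4 := by
    calc ∫ k, |φ k - F1 k| ∂μ = ∫ k, |F1 k - φ k| ∂μ := by
          simp only [abs_sub_comm]
      _ ≤ ε/4 := hnear
  calc ∫ k in T, min 1 |F (k * u) - F k| ∂μ
      ≤ (∫ k, |F1 (k*u) - φ (k*u)| ∂μ) + (∫ k, |φ (k*u) - φ k| ∂μ)
        + ∫ k, |φ k - F1 k| ∂μ := by
        rw [← hsplit]; exact le_trans step1 (le_trans step2 step3)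
    _ ≤ ε/4 + ε/4 + ε/4 := by
        rw [hinv]
        exact add_le_add (add_le_add hnear (le_of_lt hJu)) hnear2
    _ < ε := by linarith

/-- Continuity in `h` of `h ↦ ∫ g in U, min 1 |F (g * h) - F g| ∂μ`. -/
private lemma continuous_psi {G : Type*} [TopologicalSpace G] [PolishSpace G]
    [Group G] [IsTopologicalGroup G] [LocallyCompactSpace G]
    [MeasurableSpace G] [BorelSpace G]
    (μ : Measure G) [μ.IsMulRightInvariant] [μ.Regular]
    (F : G → ℝ) (hF : Measurable F) (hFb : ∀ g, |F g| ≤ 1)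
    {U : Set G} (hUm : MeasurableSet U) (hUc : IsCompact (closure U)) :
    Continuous (fun h => ∫ g in U, min 1 |F (g * h) - F g| ∂μ) := by
  have hUfin : μ U < ⊤ := lt_of_le_of_lt (measure_mono subset_closure) hUc.measure_lt_top
  have hint : ∀ h : G, IntegrableOn (fun g => min 1 |F (g * h) - F g|) U μ := by
    intro h
    refine integrableOn_of_bounded' hUfin
      (measurable_const.min ((hF.comp (measurable_mul_const h)).sub hF).abs) fun g => ?_
    rw [abs_of_nonneg (le_min zero_le_one (abs_nonneg _))]
    exact min_le_left _ _
  rw [continuous_iff_continuousAt]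
  intro h₀
  have hTc : IsCompact ((fun k => k * h₀) '' closure U) :=
    hUc.image (continuous_mul_right h₀)
  set T : Set G := (fun k => k * h₀) '' closure U with hTdef
  have key : ∀ h : G,
      |(∫ g in U, min 1 |F (g * h) - F g| ∂μ) - ∫ g in U, min 1 |F (g * h₀) - F g| ∂μ|
      ≤ ∫ k in T, min 1 |F (k * (h₀⁻¹ * h)) - F k| ∂μ := by
    intro h
    set u : G := h₀⁻¹ * h with hu
    set D : G → ℝ := fun k => min 1 |F (k * u) - F k| with hDdef
    have hDm : Measurable D :=
      measurable_const.min ((hF.comp (measurable_mul_const u)).sub hF).abs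
    have hDb : ∀ k, |D k| ≤ 1 := by
      intro k
      rw [hDdef, abs_of_nonneg (le_min zero_le_one (abs_nonneg _))]
      exact min_le_left _ _
    have hDnn : ∀ k, 0 ≤ D k := fun k => le_min zero_le_one (abs_nonneg _)
    rw [← integral_sub (hint h) (hint h₀)]
    have hnorm := norm_integral_le_integral_norm (μ := μ.restrict U)
      (f := fun g => min 1 |F (g * h) - F g| - min 1 |F (g * h₀) - F g|)
    simp only [Real.norm_eq_abs] at hnorm
    refine le_trans hnorm ?_
    -- pointwise bound then change of variables
    have hpt : ∫ g in U, abs (min 1 |F (g * h) - F g| - min 1 |F (g * h₀) - F g|) ∂μ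
        ≤ ∫ g in U, D (g * h₀) ∂μ := by
      have hai : IntegrableOn
          (fun g => abs (min 1 |F (g * h) - F g| - min 1 |F (g * h₀) - F g|)) U μ := by
        simpa [IntegrableOn] using ((hint h).sub (hint h₀)).abs
      refine integral_mono hai ?_ fun g => ?_
      · refine integrableOn_of_bounded' hUfin (hDm.comp (measurable_mul_const h₀))
          fun g => hDb _
      · have := min1_abs (F (g * h)) (F (g * h₀)) (F g)
        have harg : F (g * h) = F ((g * h₀) * u) := by
          rw [hu, mul_assoc, mul_inv_cancel_left]
        rw [hDdef]
        simp only []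
        rw [← harg]
        exact this
    refine hpt.trans ?_
    -- change of variables g ↦ g * h₀
    set V : Set G := (fun k => k * h₀) '' U with hVdef
    have hVm : MeasurableSet V := by
      have : V = (fun k => k * h₀⁻¹) ⁻¹' U := by
        ext k
        simp only [hVdef, Set.mem_image, Set.mem_preimage]
        constructor
        · rintro ⟨g, hg, rfl⟩; simpa using hg
        · intro hk; exact ⟨k * h₀⁻¹, hk, by group⟩
      rw [this]
      exact (measurable_mul_const h₀⁻¹) hUm
    have hchange : ∫ g in U, D (g * h₀) ∂μ = ∫ k in V, D k ∂μ := by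
      have h1 : ∀ g : G, U.indicator (fun g => D (g * h₀)) g = V.indicator D (g * h₀) := by
        intro g
        by_cases hg : g ∈ U
        · rw [Set.indicator_of_mem hg, Set.indicator_of_mem (Set.mem_image_of_mem _ hg)]
        · rw [Set.indicator_of_notMem hg, Set.indicator_of_notMem]
          rintro ⟨g', hg', hgg'⟩
          exact hg (by rwa [← mul_right_cancel hgg'])
      rw [← integral_indicator hUm, ← integral_indicator hVm]
      calc ∫ g, U.indicator (fun g => D (g * h₀)) g ∂μ
          = ∫ g, V.indicator D (g * h₀) ∂μ := by
            exact integral_congr_ae (Filter.Eventually.of_forall h1)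
        _ = ∫ k, V.indicator D k ∂μ := integral_mul_right_eq_self (V.indicator D) h₀
    rw [hchange]
    refine setIntegral_mono_set (integrableOn_of_bounded' hTc.measure_lt_top hDm hDb)
      (Filter.Eventually.of_forall fun k => hDnn k) ?_
    exact HasSubset.Subset.eventuallyLE (Set.image_mono subset_closure)
  have hb : Tendsto (fun h => ∫ k in T, min 1 |F (k * (h₀⁻¹ * h)) - F k| ∂μ)
      (𝓝 h₀) (𝓝 0) := by
    refine (tendsto_translate_integral μ F hF hFb hTc).comp ?_
    have : Tendsto (fun h : G => h₀⁻¹ * h) (𝓝 h₀) (𝓝 (h₀⁻¹ * h₀)) :=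
      ((continuous_const.mul continuous_id).tendsto h₀)
    simpa using this
  have htend : Tendsto (fun h => ∫ g in U, min 1 |F (g * h) - F g| ∂μ) (𝓝 h₀)
      (𝓝 (∫ g in U, min 1 |F (g * h₀) - F g| ∂μ)) :=
    tendsto_iff_dist_tendsto_zero.2 (squeeze_zero (fun h => dist_nonneg)
      (fun h => by rw [Real.dist_eq]; exact key h) hb)
  exact htend

/-- Main auxiliary lemma, with an abstract right-invariant regular measure. -/
private lemma free_part_is_borel_aux {G X : Type*} [TopologicalSpace G] [PolishSpace G]
    [Group G] [IsTopologicalGroup G] [LocallyCompactSpace G]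
    [MeasurableSpace G] [BorelSpace G]
    [MeasurableSpace X] [StandardBorelSpace X]
    (μ : Measure G) [μ.IsMulRightInvariant] [μ.Regular] [μ.IsOpenPosMeasure] [SFinite μ]
    (a : G → X → X)
    (hid : ∀ x, a 1 x = x)
    (hmul : ∀ g h x, a (g * h) x = a g (a h x))
    (hmeas : Measurable fun p : G × X => a p.1 p.2)
    (e' : X → ℝ) (he'inj : Function.Injective e') (he'b : ∀ y, |e' y| ≤ 1)
    (he'meas : Measurable e') :
    MeasurableSet {x : X | ∀ g : G, g ≠ 1 → a g x ≠ x} := by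
  classical
  letI := TopologicalSpace.upgradeIsCompletelyMetrizable G
  obtain ⟨V, hVc, hVn⟩ := exists_compact_mem_nhds (1 : G)
  set U : Set G := interior V with hUdef
  have hUo : IsOpen U := isOpen_interior
  have hUne : (1:G) ∈ U := mem_interior_iff_mem_nhds.2 hVn
  have hclU : IsCompact (closure U) :=
    hVc.of_isClosed_subset isClosed_closure (closure_minimal interior_subset hVc.isClosed)
  have hUfin : μ U < ⊤ := lt_of_le_of_lt (measure_mono subset_closure) hclU.measure_lt_top
  have hU0 : μ U ≠ 0 := hUo.measure_ne_zero μ ⟨1, hUne⟩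
  set Ψ : G → X → ℝ :=
    fun h x => ∫ g in U, min 1 |e' (a (g * h) x) - e' (a g x)| ∂μ with hΨdef
  -- basic properties of Ψ
  have hFmeas : ∀ x : X, Measurable fun g : G => e' (a g x) := fun x =>
    he'meas.comp (hmeas.comp (measurable_id.prodMk measurable_const))
  have hΨcont : ∀ x, Continuous fun h => Ψ h x := by
    intro x
    exact continuous_psi μ (fun g => e' (a g x)) (hFmeas x) (fun g => he'b _)
      hUo.measurableSet hclU
  have hΨmeas : ∀ h, Measurable fun x => Ψ h x := by
    intro h
    have m1 : Measurable fun p : X × G => a (p.2 * h) p.1 :=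
      hmeas.comp ((measurable_snd.mul_const h).prodMk measurable_fst)
    have m2 : Measurable fun p : X × G => a p.2 p.1 :=
      hmeas.comp (measurable_snd.prodMk measurable_fst)
    have hsm : StronglyMeasurable (Function.uncurry fun (x : X) (g : G) =>
        min 1 |e' (a (g * h) x) - e' (a g x)|) := by
      apply Measurable.stronglyMeasurable
      exact measurable_const.min
        (((he'meas.comp m1).sub (he'meas.comp m2)).abs)
    exact hsm.integral_prod_right.measurable
  have hΨnn : ∀ h x, 0 ≤ Ψ h x := fun h x =>
    integral_nonneg fun g => le_min zero_le_one (abs_nonneg _)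
  have hint : ∀ (h : G) (x : X),
      IntegrableOn (fun g => min 1 |e' (a (g * h) x) - e' (a g x)|) U μ := by
    intro h x
    refine integrableOn_of_bounded' hUfin
      (measurable_const.min
        (((hFmeas x).comp (measurable_mul_const h)).sub (hFmeas x)).abs) fun g => ?_
    rw [abs_of_nonneg (le_min zero_le_one (abs_nonneg _))]
    exact min_le_left _ _
  have hΨzero : ∀ h x, Ψ h x = 0 ↔ a h x = x := by
    intro h x
    constructor
    · intro h0
      have hae := (integral_eq_zero_iff_of_nonneg
        (fun g => le_min zero_le_one (abs_nonneg _)) (hint h x)).1 h0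
      by_contra hne
      have hall : ∀ g ∈ U, min 1 |e' (a (g * h) x) - e' (a g x)| ≠ 0 := by
        intro g _ h0'
        have habs : |e' (a (g * h) x) - e' (a g x)| = 0 := by
          rcases le_total (1:ℝ) (|e' (a (g * h) x) - e' (a g x)|) with h'|h'
          · rw [min_eq_left h'] at h0'; norm_num at h0'
          · rwa [min_eq_right h'] at h0'
        have heq : e' (a (g * h) x) = e' (a g x) :=
          sub_eq_zero.1 (abs_eq_zero.1 habs)
        have h2 : a g (a h x) = a g x := by rw [← hmul]; exact he'inj heq
        have h3 : a h x = x := by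
          have h4 : a (g⁻¹ * g) (a h x) = a (g⁻¹ * g) x := by
            rw [hmul, hmul]; exact congrArg (a g⁻¹) h2
          rw [inv_mul_cancel, hid, hid] at h4
          exact h4
        exact hne h3
      have hμ0 : μ.restrict U {g | ¬ min 1 |e' (a (g * h) x) - e' (a g x)| = 0} = 0 := by
        have := hae
        rw [Filter.EventuallyEq] at this
        exact ae_iff.1 this
      have hle : μ U ≤ μ.restrict U {g | ¬ min 1 |e' (a (g * h) x) - e' (a g x)| = 0} := by
        rw [← Measure.restrict_apply_self μ U]
        exact measure_mono fun g hg => hall g hg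
      exact hU0 (le_antisymm (hμ0 ▸ hle) zero_le)
    · intro hfix
      have : ∀ g : G, min 1 |e' (a (g * h) x) - e' (a g x)| = 0 := by
        intro g
        rw [hmul, hfix]
        simp
      rw [hΨdef]
      simp only [this, integral_zero]
  -- σ-compact cover of G \ {1}
  set L : CompactExhaustion G := CompactExhaustion.choice G with hLdef
  set K : ℕ → ℕ → Set G :=
    fun n m => L n ∩ {g : G | 1 / ((m:ℝ) + 1) ≤ dist g 1} with hKdef
  have hKcomp : ∀ n m, IsCompact (K n m) := by
    intro n m
    exact (L.isCompact n).inter_right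
      (isClosed_le continuous_const ((continuous_id.dist continuous_const)))
  have hKne1 : ∀ n m, ∀ g ∈ K n m, g ≠ 1 := by
    intro n m g hg
    rintro rfl
    have := hg.2
    simp only [Set.mem_setOf_eq, dist_self] at this
    have h1 : (0:ℝ) < 1 / ((m:ℝ) + 1) := by positivity
    linarith
  have hKcover : ∀ g : G, g ≠ 1 → ∃ n m, g ∈ K n m := by
    intro g hg
    obtain ⟨n, hn⟩ := L.exists_mem g
    have hd : 0 < dist g 1 := dist_pos.2 hg
    obtain ⟨m, hm⟩ := exists_nat_one_div_lt hd
    exact ⟨n, m, hn, le_of_lt hm⟩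
  -- countable dense subsets of the compacts
  have hD : ∀ n m, ∃ D : Set G, D.Countable ∧ D ⊆ K n m ∧
      ∀ O : Set G, IsOpen O → (O ∩ K n m).Nonempty → (O ∩ D).Nonempty := by
    intro n m
    obtain ⟨s, hsc, hsd⟩ := TopologicalSpace.exists_countable_dense ↥(K n m)
    refine ⟨Subtype.val '' s, hsc.image _, Subtype.coe_image_subset _ _, ?_⟩
    rintro O hO ⟨y, hyO, hyK⟩
    have hO' : IsOpen (Subtype.val ⁻¹' O : Set ↥(K n m)) :=
      hO.preimage continuous_subtype_val
    obtain ⟨d, hdO, hds⟩ := hsd.inter_open_nonempty _ hO' ⟨⟨y, hyK⟩, hyO⟩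
    exact ⟨d.val, hdO, Set.mem_image_of_mem _ hds⟩
  choose D hDc hDK hDd using hD
  -- the key Borel description of the "stabilized by K n m" sets
  have claim2 : ∀ n m, {x : X | ∃ h ∈ K n m, a h x = x}
      = ⋂ j : ℕ, ⋃ d ∈ D n m, {x : X | Ψ d x < 1 / ((j:ℝ) + 1)} := by
    intro n m
    ext x
    simp only [Set.mem_setOf_eq, Set.mem_iInter, Set.mem_iUnion, exists_prop]
    constructor
    · rintro ⟨h, hhK, hfix⟩ j
      have hΨ0 : Ψ h x = 0 := (hΨzero h x).2 hfix
      have hO : IsOpen {g : G | Ψ g x < 1 / ((j:ℝ) + 1)} :=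
        isOpen_Iio.preimage (hΨcont x)
      have hne : ({g : G | Ψ g x < 1 / ((j:ℝ) + 1)} ∩ K n m).Nonempty := by
        refine ⟨h, ?_, hhK⟩
        rw [Set.mem_setOf_eq, hΨ0]
        positivity
      obtain ⟨d, hdO, hdD⟩ := hDd n m _ hO hne
      exact ⟨d, hdD, hdO⟩
    · intro hx
      choose dseq hdD hdlt using hx
      set t : ℕ → Set G :=
        fun j => K n m ∩ (fun h => Ψ h x) ⁻¹' Set.Iic (1 / ((j:ℝ) + 1)) with htdef
      have htclosed : ∀ j, IsClosed (t j) :=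
        fun j => ((hKcomp n m).isClosed).inter (isClosed_Iic.preimage (hΨcont x))
      have htcomp : IsCompact (t 0) :=
        (hKcomp n m).inter_right (isClosed_Iic.preimage (hΨcont x))
      have htne : ∀ j, (t j).Nonempty := by
        intro j
        exact ⟨dseq j, hDK n m (hdD j), le_of_lt (hdlt j)⟩
      have htdec : ∀ j, t (j + 1) ⊆ t j := by
        intro j
        refine Set.inter_subset_inter_right _ ?_
        refine Set.preimage_mono ?_
        refine Set.Iic_subset_Iic.2 ?_
        have h1 : (0:ℝ) < (j:ℝ) + 1 := by positivity
        apply one_div_le_one_div_of_le h1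
        push_cast
        linarith
      obtain ⟨h, hh⟩ :=
        IsCompact.nonempty_iInter_of_sequence_nonempty_isCompact_isClosed
          t htdec htne htcomp htclosed
      rw [Set.mem_iInter] at hh
      have hKh : h ∈ K n m := (hh 0).1
      have hΨ0 : Ψ h x = 0 := by
        refine le_antisymm ?_ (hΨnn h x)
        by_contra hpos
        push_neg at hpos
        obtain ⟨j, hj⟩ := exists_nat_one_div_lt hpos
        have := (hh j).2
        simp only [Set.mem_preimage, Set.mem_Iic] at this
        linarith
      exact ⟨h, hKh, (hΨzero h x).1 hΨ0⟩
  -- final set identity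
  have setEq : {x : X | ∀ g : G, g ≠ 1 → a g x ≠ x}
      = ⋂ n : ℕ, ⋂ m : ℕ, {x : X | ∃ h ∈ K n m, a h x = x}ᶜ := by
    ext x
    simp only [Set.mem_setOf_eq, Set.mem_iInter, Set.mem_compl_iff]
    constructor
    · rintro hfree n m ⟨h, hhK, hfix⟩
      exact hfree h (hKne1 n m h hhK) hfix
    · intro hx g hg hfix
      obtain ⟨n, m, hgK⟩ := hKcover g hg
      exact hx n m ⟨g, hgK, hfix⟩
  rw [setEq]
  refine MeasurableSet.iInter fun n => MeasurableSet.iInter fun m => MeasurableSet.compl ?_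
  rw [claim2 n m]
  refine MeasurableSet.iInter fun j => ?_
  refine MeasurableSet.biUnion (hDc n m) fun d _ => ?_
  exact (hΨmeas d) measurableSet_Iio

/-- For a locally compact Polish group `G` acting Borel-measurably on a standard Borel
space `X`, the free part `{x | ∀ g ≠ 1, g • x ≠ x}` is Borel. -/
theorem free_part_is_borel {G X : Type*} [TopologicalSpace G] [PolishSpace G]
    [Group G] [IsTopologicalGroup G] [LocallyCompactSpace G]
    [MeasurableSpace G] [BorelSpace G]
    [MeasurableSpace X] [StandardBorelSpace X]
    (a : G → X → X)
    (hid : ∀ x, a 1 x = x)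
    (hmul : ∀ g h x, a (g * h) x = a g (a h x))
    (hmeas : Measurable fun p : G × X => a p.1 p.2) :
    MeasurableSet {x : X | ∀ g : G, g ≠ 1 → a g x ≠ x} := by
  obtain ⟨e, he⟩ := MeasureTheory.exists_measurableEmbedding_real X
  have he'inj : Function.Injective fun y : X => Real.arctan (e y) / 2 := by
    intro y z h
    simp only at h
    apply he.injective
    apply Real.arctan_injective
    linarith
  have he'b : ∀ y : X, |Real.arctan (e y) / 2| ≤ 1 := by
    intro y
    have h1 : Real.arctan (e y) < Real.pi / 2 := Real.arctan_lt_pi_div_two _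
    have h2 : -(Real.pi / 2) < Real.arctan (e y) := Real.neg_pi_div_two_lt_arctan _
    have h3 : Real.pi ≤ 4 := Real.pi_le_four
    rw [abs_le]
    constructor <;> [linarith; linarith]
  have he'meas : Measurable fun y : X => Real.arctan (e y) / 2 :=
    (Real.continuous_arctan.measurable.comp he.measurable).div_const 2
  exact free_part_is_borel_aux (MeasureTheory.Measure.haar (G := G)).inv a hid hmul hmeas
    _ he'inj he'b he'meas
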